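/- Let L be a family of n pairwise disjoint non-vertical lines in ℝ³, and let X be the set of all points p lying on a line of L such that π(p) is an intersection point of the vertical projections of two distinct lines of L. Then the family of fragments consisting, for each ℓ ∈ L, of the connected components of ℓ ∖ X, admits a depth order, and this family has at most n² fragments. -/

import Mathlib

noncomputable section

/-- Points of `ℝ³`, modeled as `ℝ × ℝ × ℝ`. -/
abbrev R3 : Type := ℝ × ℝ × ℝ

/-- Points of `ℝ²`, modeled as `ℝ × ℝ`. -/
abbrev R2 : Type := ℝ × ℝ

/-- The vertical projection `π : ℝ³ → ℝ²`, `(x,y,z) ↦ (x,y)`. -/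
def vproj (p : R3) : R2 := (p.1, p.2.1)

/-- The `z`-coordinate of a point of `ℝ³`. -/
def zcoord (p : R3) : ℝ := p.2.2

/-- `Below A B` (`A ≺ B`): there are `p ∈ A`, `q ∈ B` on a common vertical line
with the `z`-coordinate of `p` strictly smaller than that of `q`. -/
def Below (A B : Set R3) : Prop :=
  ∃ p ∈ A, ∃ q ∈ B, vproj p = vproj q ∧ zcoord p < zcoord q

/-- A (finite) family of sets admits a depth order: it can be enumerated so that
`S_i ≺ S_j` implies `i < j`; equivalently, there is a rank function which is strictly
monotone along the `Below` relation. -/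
def HasDepthOrder (F : Set (Set R3)) : Prop :=
  ∃ f : Set R3 → ℕ, ∀ A ∈ F, ∀ B ∈ F, Below A B → f A < f B

/-- A set is non-vertical if no two of its points lie on a common vertical line. -/
def NonVertical (S : Set R3) : Prop :=
  ∀ p ∈ S, ∀ q ∈ S, vproj p = vproj q → p = q

/-- The triangle spanned by a triple of vertices. -/
def triOf (t : R3 × R3 × R3) : Set R3 := convexHull ℝ {t.1, t.2.1, t.2.2}

/-- The vertex set of a triangle given by a triple of vertices. -/
def vertsOf (t : R3 × R3 × R3) : Set R3 := {t.1, t.2.1, t.2.2}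

/-- The edges of a triangle: the closed segments joining pairs of its vertices. -/
def edgesOf (t : R3 × R3 × R3) : Set (Set R3) :=
  {segment ℝ t.1 t.2.1, segment ℝ t.1 t.2.2, segment ℝ t.2.1 t.2.2}

/-- The three edges of a triangle, as pairs of endpoints. -/
def edgePairsOf (t : R3 × R3 × R3) : Set (R3 × R3) :=
  {(t.1, t.2.1), (t.1, t.2.2), (t.2.1, t.2.2)}

/-- A triple of points are the vertices of a genuine triangle when they are
affinely independent. -/
def IsTriangleVerts (t : R3 × R3 × R3) : Prop :=
  AffineIndependent ℝ ![t.1, t.2.1, t.2.2]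

/-- A set is a triangle if it is the convex hull of three affinely independent points. -/
def IsTriangle (S : Set R3) : Prop :=
  ∃ a b c : R3, AffineIndependent ℝ ![a, b, c] ∧ S = convexHull ℝ {a, b, c}

/-- The closed segment with the given pair of endpoints. -/
def segOf (e : R3 × R3) : Set R3 := segment ℝ e.1 e.2

/-- The line through `ℓ.1` with direction `ℓ.2`. -/
def lineOf (ℓ : R3 × R3) : Set R3 := {p : R3 | ∃ c : ℝ, p = ℓ.1 + c • ℓ.2}

/-- The fragments obtained by cutting the set `S` at the points of `X`:
the connected components of `S \ X`. -/
def cutFragments (S : Set R3) (X : Set R3) : Set (Set R3) :=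
  {F | ∃ p ∈ S \ X, F = connectedComponentIn (S \ X) p}


open Set

section Aux

/-- Two distinct common points force two parametrized lines to coincide. -/
lemma line_eq_pair {V : Type*} [AddCommGroup V] [Module ℝ V] {x v p q : V} {a b : ℝ}
    (hp : p = x + a • v) (hq : q = x + b • v) (hab : a ≠ b) :
    {z : V | ∃ c : ℝ, z = x + c • v} = {z : V | ∃ c : ℝ, z = p + c • (q - p)} := by
  have hba : b - a ≠ 0 := sub_ne_zero.2 (Ne.symm hab)
  ext z
  constructor
  · rintro ⟨c, rfl⟩
    refine ⟨(c - a) / (b - a), ?_⟩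
    rw [hp, hq]
    match_scalars <;> field_simp <;> ring
  · rintro ⟨c, rfl⟩
    refine ⟨a + c * (b - a), ?_⟩
    rw [hp, hq]
    match_scalars <;> ring

lemma line_eq_of_two {V : Type*} [AddCommGroup V] [Module ℝ V] {x v y w p q : V}
    (hp : ∃ c : ℝ, p = x + c • v) (hq : ∃ c : ℝ, q = x + c • v)
    (hp' : ∃ c : ℝ, p = y + c • w) (hq' : ∃ c : ℝ, q = y + c • w) (hpq : p ≠ q) :
    {z : V | ∃ c : ℝ, z = x + c • v} = {z : V | ∃ c : ℝ, z = y + c • w} := by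
  obtain ⟨a, ha⟩ := hp; obtain ⟨b, hb⟩ := hq
  obtain ⟨a', ha'⟩ := hp'; obtain ⟨b', hb'⟩ := hq'
  have hab : a ≠ b := by rintro rfl; exact hpq (ha.trans hb.symm)
  have hab' : a' ≠ b' := by rintro rfl; exact hpq (ha'.trans hb'.symm)
  rw [line_eq_pair ha hb hab, line_eq_pair ha' hb' hab']

lemma sInf_not_mem_of_isOpen {C : Set ℝ} (hC : IsOpen C) (hb : BddBelow C) :
    sInf C ∉ C := by
  intro hm
  obtain ⟨ε, hε, hball⟩ := Metric.isOpen_iff.1 hC _ hm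
  have h2 : sInf C - ε / 2 ∈ C := by
    apply hball
    rw [Metric.mem_ball, Real.dist_eq, abs_of_nonpos (by linarith)]
    linarith
  have := csInf_le hb h2
  linarith

/-- The real line minus a finite set of points has at most `|T| + 1`
connected components. -/
lemma comps_ncard_le (T : Set ℝ) (hT : T.Finite) :
    {C : Set ℝ | ∃ t ∈ Tᶜ, C = connectedComponentIn Tᶜ t}.Finite ∧
    {C : Set ℝ | ∃ t ∈ Tᶜ, C = connectedComponentIn Tᶜ t}.ncard ≤ T.ncard + 1 := by
  classical
  have hU : IsOpen Tᶜ := hT.isClosed.isOpen_compl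
  set comps := {C : Set ℝ | ∃ t ∈ Tᶜ, C = connectedComponentIn Tᶜ t} with hcomps
  have hbasic : ∀ C ∈ comps, IsOpen C ∧ C.Nonempty ∧ C ⊆ Tᶜ ∧ IsPreconnected C ∧
      (∀ x ∈ C, C = connectedComponentIn Tᶜ x) := by
    rintro C ⟨t, ht, rfl⟩
    refine ⟨hU.connectedComponentIn, ⟨t, mem_connectedComponentIn ht⟩,
      connectedComponentIn_subset _ _, isPreconnected_connectedComponentIn, ?_⟩
    intro x hx
    exact connectedComponentIn_eq hx
  have hA : ∀ C ∈ comps, BddBelow C → sInf C ∈ T := by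
    intro C hC hb
    obtain ⟨hop, hne, hsub, hpre, hmax⟩ := hbasic C hC
    by_contra hm
    have hmcl : sInf C ∈ closure C := csInf_mem_closure hne hb
    have hCC : IsPreconnected (insert (sInf C) C) :=
      hpre.subset_closure (subset_insert _ _) (insert_subset hmcl subset_closure)
    obtain ⟨t, ht⟩ := hne
    have hsub' : insert (sInf C) C ⊆ Tᶜ := insert_subset hm hsub
    have := hCC.subset_connectedComponentIn (mem_insert_of_mem _ ht) hsub'
    rw [← hmax t ht] at this
    exact sInf_not_mem_of_isOpen hop hb (this (mem_insert _ _))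
  set f : Set ℝ → Option ℝ := fun C => if BddBelow C then some (sInf C) else none with hf
  have hmaps : ∀ C ∈ comps, f C ∈ insert none (some '' T) := by
    intro C hC
    by_cases hb : BddBelow C
    · simp only [hf, if_pos hb]
      exact mem_insert_of_mem _ ⟨_, hA C hC hb, rfl⟩
    · simp [hf, if_neg hb]
  have hinj : InjOn f comps := by
    intro C hC C' hC' hfe
    obtain ⟨hop, hne, hsub, hpre, hmax⟩ := hbasic C hC
    obtain ⟨hop', hne', hsub', hpre', hmax'⟩ := hbasic C' hC'
    suffices h : (C ∩ C').Nonempty by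
      obtain ⟨x, hx, hx'⟩ := h
      rw [hmax x hx, hmax' x hx']
    by_cases hb : BddBelow C
    · have hb' : BddBelow C' := by
        by_contra hb'
        simp [hf, if_pos hb, if_neg hb'] at hfe
      have hinf : sInf C = sInf C' := by
        simpa [hf, if_pos hb, if_pos hb'] using hfe
      obtain ⟨t, ht⟩ := id hne
      have hmt : sInf C < t := lt_of_le_of_ne (csInf_le hb ht)
        (fun h => sInf_not_mem_of_isOpen hop hb (h ▸ ht))
      obtain ⟨c', hc', hc't⟩ := exists_lt_of_csInf_lt hne' (by rw [← hinf]; exact hmt)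
      have hmc' : sInf C < c' := by
        rw [hinf]
        exact lt_of_le_of_ne (csInf_le hb' hc')
          (fun h => sInf_not_mem_of_isOpen hop' hb' (h ▸ hc'))
      obtain ⟨c, hc, hcc'⟩ := exists_lt_of_csInf_lt (id hne) hmc'
      have : c' ∈ C := hpre.ordConnected.out hc ht ⟨hcc'.le, hc't.le⟩
      exact ⟨c', this, hc'⟩
    · have hb' : ¬ BddBelow C' := by
        by_contra hb'
        simp [hf, if_neg hb, if_pos hb'] at hfe
      obtain ⟨t', ht'⟩ := id hne'
      obtain ⟨c, hc, hct'⟩ := not_bddBelow_iff.1 hb t'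
      obtain ⟨c', hc', hc'c⟩ := not_bddBelow_iff.1 hb' c
      have : c ∈ C' := hpre'.ordConnected.out hc' ht' ⟨hc'c.le, hct'.le⟩
      exact ⟨c, hc, this⟩
  have htgt : (insert none (some '' T) : Set (Option ℝ)).Finite :=
    (hT.image _).insert _
  have hfin : comps.Finite :=
    Finite.of_finite_image (htgt.subset (image_subset_iff.2 hmaps)) hinj
  refine ⟨hfin, ?_⟩
  calc comps.ncard ≤ (insert none (some '' T) : Set (Option ℝ)).ncard :=
        ncard_le_ncard_of_injOn f hmaps hinj htgt
    _ ≤ (some '' T).ncard + 1 := ncard_insert_le _ _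
    _ ≤ T.ncard + 1 := by
        gcongr
        exact ncard_image_le hT

lemma ccIn_image {α β : Type*} [TopologicalSpace α] [TopologicalSpace β]
    {φ : α → β} {ψ : β → α} (hφ : Continuous φ) (hψ : Continuous ψ)
    (hid : ∀ t, ψ (φ t) = t) (A : Set α) {t : α} (ht : t ∈ A) :
    connectedComponentIn (φ '' A) (φ t) = φ '' connectedComponentIn A t := by
  apply subset_antisymm
  · intro c hc
    have hsub : connectedComponentIn (φ '' A) (φ t) ⊆ φ '' A :=
      connectedComponentIn_subset _ _
    have hpre : IsPreconnected (ψ '' connectedComponentIn (φ '' A) (φ t)) :=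
      isPreconnected_connectedComponentIn.image _ hψ.continuousOn
    have hsub2 : ψ '' connectedComponentIn (φ '' A) (φ t) ⊆ A := by
      rintro _ ⟨c, hc, rfl⟩
      obtain ⟨s, hs, rfl⟩ := hsub hc
      rw [hid]; exact hs
    have hmem : t ∈ ψ '' connectedComponentIn (φ '' A) (φ t) :=
      ⟨φ t, mem_connectedComponentIn (mem_image_of_mem _ ht), hid t⟩
    have h := hpre.subset_connectedComponentIn hmem hsub2
    obtain ⟨s, hs, rfl⟩ := hsub hc
    refine ⟨s, ?_, rfl⟩
    have : ψ (φ s) ∈ connectedComponentIn A t := h ⟨φ s, hc, rfl⟩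
    rwa [hid] at this
  · have hpre : IsPreconnected (φ '' connectedComponentIn A t) :=
      isPreconnected_connectedComponentIn.image _ hφ.continuousOn
    exact hpre.subset_connectedComponentIn
      (mem_image_of_mem _ (mem_connectedComponentIn ht))
      (image_mono (connectedComponentIn_subset _ _))

lemma vproj_add_smul (p q : R3) (c : ℝ) :
    vproj (p + c • q) = vproj p + c • vproj q := rfl

lemma vproj_image_lineOf (ℓ : R3 × R3) :
    vproj '' lineOf ℓ = {z : R2 | ∃ c : ℝ, z = vproj ℓ.1 + c • vproj ℓ.2} := by
  ext z
  constructor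
  · rintro ⟨p, ⟨c, rfl⟩, rfl⟩
    exact ⟨c, (vproj_add_smul _ _ _)⟩
  · rintro ⟨c, rfl⟩
    exact ⟨ℓ.1 + c • ℓ.2, ⟨c, rfl⟩, (vproj_add_smul _ _ _).symm⟩

/-- The per-line fragment bound. -/
lemma frag_bound (L : Finset (R3 × R3))
    (hdir : ∀ ℓ ∈ L, ℓ.2 ≠ 0)
    (hNV : ∀ ℓ ∈ L, NonVertical (lineOf ℓ))
    (X : Set R3)
    (hX : X = {p : R3 | (∃ ℓ ∈ L, p ∈ lineOf ℓ) ∧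
      ∃ ℓ₁ ∈ L, ∃ ℓ₂ ∈ L, lineOf ℓ₁ ≠ lineOf ℓ₂ ∧
        vproj p ∈ vproj '' lineOf ℓ₁ ∧ vproj p ∈ vproj '' lineOf ℓ₂})
    {ℓ : R3 × R3} (hℓ : ℓ ∈ L) :
    (cutFragments (lineOf ℓ) X).Finite ∧
    (cutFragments (lineOf ℓ) X).ncard ≤ L.card := by
  classical
  by_cases hbad : ∃ ℓ₁ ∈ L, ∃ ℓ₂ ∈ L, lineOf ℓ₁ ≠ lineOf ℓ₂ ∧
      vproj '' lineOf ℓ₁ = vproj '' lineOf ℓ ∧ vproj '' lineOf ℓ₂ = vproj '' lineOf ℓ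
  · -- the whole line is cut away: no fragments
    obtain ⟨ℓ₁, h1, ℓ₂, h2, hne12, hP1, hP2⟩ := hbad
    have hsubX : lineOf ℓ ⊆ X := by
      intro p hp
      rw [hX]
      exact ⟨⟨ℓ, hℓ, hp⟩, ℓ₁, h1, ℓ₂, h2, hne12,
        by rw [hP1]; exact mem_image_of_mem _ hp,
        by rw [hP2]; exact mem_image_of_mem _ hp⟩
    have hempty : cutFragments (lineOf ℓ) X = ∅ := by
      ext F
      simp only [cutFragments, mem_setOf_eq, mem_empty_iff_false, iff_false]
      rintro ⟨p, hp, -⟩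
      exact hp.2 (hsubX hp.1)
    rw [hempty]
    simp
  · -- parametrize the line
    set a := ℓ.1 with ha
    set d := ℓ.2 with hd
    have hd0 : d ≠ 0 := hdir ℓ hℓ
    set φ : ℝ → R3 := fun t => a + t • d with hφdef
    have hφ : Continuous φ := by fun_prop
    have hden : d.1 ^ 2 + d.2.1 ^ 2 + d.2.2 ^ 2 ≠ 0 := by
      have h1 : d.1 ≠ 0 ∨ d.2.1 ≠ 0 ∨ d.2.2 ≠ 0 := by
        by_contra h
        push_neg at h
        exact hd0 (by rw [Prod.ext_iff, Prod.ext_iff]; exact ⟨h.1, h.2.1, h.2.2⟩)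
      intro heq
      have h2 : (0:ℝ) ≤ d.1 ^ 2 := sq_nonneg _
      have h3 : (0:ℝ) ≤ d.2.1 ^ 2 := sq_nonneg _
      have h4 : (0:ℝ) ≤ d.2.2 ^ 2 := sq_nonneg _
      have e1 : d.1 = 0 := (pow_eq_zero_iff (two_ne_zero)).1 (by nlinarith)
      have e2 : d.2.1 = 0 := (pow_eq_zero_iff (two_ne_zero)).1 (by nlinarith)
      have e3 : d.2.2 = 0 := (pow_eq_zero_iff (two_ne_zero)).1 (by nlinarith)
      rcases h1 with h | h | h <;> [exact h e1; exact h e2; exact h e3]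
    set ψ : R3 → ℝ := fun p =>
      ((p.1 - a.1) * d.1 + (p.2.1 - a.2.1) * d.2.1 + (p.2.2 - a.2.2) * d.2.2) /
        (d.1 ^ 2 + d.2.1 ^ 2 + d.2.2 ^ 2) with hψdef
    have hψ : Continuous ψ := by fun_prop
    have hid : ∀ t, ψ (φ t) = t := by
      intro t
      show ((a.1 + t * d.1 - a.1) * d.1 + (a.2.1 + t * d.2.1 - a.2.1) * d.2.1 +
        (a.2.2 + t * d.2.2 - a.2.2) * d.2.2) / (d.1 ^ 2 + d.2.1 ^ 2 + d.2.2 ^ 2) = t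
      field_simp
      ring
    have hrange : lineOf ℓ = range φ := by
      ext p
      constructor
      · rintro ⟨c, rfl⟩; exact ⟨c, rfl⟩
      · rintro ⟨c, rfl⟩; exact ⟨c, rfl⟩
    set T : Set ℝ := {t | φ t ∈ X} with hT
    have hwit : ∀ t ∈ T, ∃ ℓ', ℓ' ∈ L ∧ vproj '' lineOf ℓ' ≠ vproj '' lineOf ℓ ∧
        vproj (φ t) ∈ vproj '' lineOf ℓ' := by
      intro t ht
      have := ht
      rw [hT, mem_setOf_eq, hX] at this
      obtain ⟨-, ℓ₁, h1, ℓ₂, h2, hne12, hm1, hm2⟩ := this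
      by_cases hc : vproj '' lineOf ℓ₁ = vproj '' lineOf ℓ
      · refine ⟨ℓ₂, h2, ?_, hm2⟩
        intro hc2
        exact hbad ⟨ℓ₁, h1, ℓ₂, h2, hne12, hc, hc2⟩
      · exact ⟨ℓ₁, h1, hc, hm1⟩
    choose! g hgL hgne hgmem using hwit
    have hφline : ∀ t : ℝ, φ t ∈ lineOf ℓ := fun t => ⟨t, rfl⟩
    have hinjφ : ∀ s t : ℝ, vproj (φ s) = vproj (φ t) → s = t := by
      intro s t h
      have h1 := hNV ℓ hℓ (φ s) (hφline s) (φ t) (hφline t) h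
      have h2 := congrArg ψ h1
      rwa [hid, hid] at h2
    have hinjg : InjOn g T := by
      intro s hs t ht hgst
      by_contra hst
      have hu : vproj (φ s) ≠ vproj (φ t) := fun h => hst (hinjφ s t h)
      have hms : vproj (φ s) ∈ vproj '' lineOf (g s) := hgmem s hs
      have hmt : vproj (φ t) ∈ vproj '' lineOf (g s) := by rw [hgst]; exact hgmem t ht
      have hms' : vproj (φ s) ∈ vproj '' lineOf ℓ := mem_image_of_mem _ (hφline s)
      have hmt' : vproj (φ t) ∈ vproj '' lineOf ℓ := mem_image_of_mem _ (hφline t)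
      rw [vproj_image_lineOf] at hms hmt hms' hmt'
      have heq := line_eq_of_two hms hmt hms' hmt' hu
      rw [← vproj_image_lineOf, ← vproj_image_lineOf] at heq
      exact hgne s hs heq
    have hgtgt : ∀ t ∈ T, g t ∈ (↑(L.erase ℓ) : Set (R3 × R3)) := by
      intro t ht
      rw [Finset.coe_erase]
      refine ⟨hgL t ht, ?_⟩
      simp only [mem_singleton_iff]
      intro h
      exact hgne t ht (by rw [h])
    have htgtfin : (↑(L.erase ℓ) : Set (R3 × R3)).Finite := (L.erase ℓ).finite_toSet
    have hTfin : T.Finite :=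
      Finite.of_finite_image (htgtfin.subset (image_subset_iff.2 hgtgt)) hinjg
    have hTcard : T.ncard ≤ L.card - 1 := by
      have := ncard_le_ncard_of_injOn g hgtgt hinjg htgtfin
      rwa [ncard_coe_finset, Finset.card_erase_of_mem hℓ] at this
    have hTX : φ '' Tᶜ = lineOf ℓ \ X := by
      ext p
      constructor
      · rintro ⟨t, ht, rfl⟩
        exact ⟨hφline t, ht⟩
      · rintro ⟨hp, hpx⟩
        obtain ⟨t, rfl⟩ := hrange ▸ hp
        exact ⟨t, hpx, rfl⟩
    have hfrag : cutFragments (lineOf ℓ) X =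
        (Set.image φ) '' {C : Set ℝ | ∃ t ∈ Tᶜ, C = connectedComponentIn Tᶜ t} := by
      ext F
      constructor
      · rintro ⟨p, hp, rfl⟩
        obtain ⟨t, ht, rfl⟩ := hTX ▸ hp
        refine ⟨connectedComponentIn Tᶜ t, ⟨t, ht, rfl⟩, ?_⟩
        rw [← hTX, ccIn_image hφ hψ hid _ ht]
      · rintro ⟨C, ⟨t, ht, rfl⟩, rfl⟩
        refine ⟨φ t, hTX ▸ ⟨t, ht, rfl⟩, ?_⟩
        rw [← hTX, ccIn_image hφ hψ hid _ ht]
    obtain ⟨hcfin, hccard⟩ := comps_ncard_le T hTfin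
    constructor
    · rw [hfrag]; exact hcfin.image _
    · rw [hfrag]
      calc ((Set.image φ) '' _).ncard ≤ _ := ncard_image_le hcfin
        _ ≤ T.ncard + 1 := hccard
        _ ≤ (L.card - 1) + 1 := by omega
        _ ≤ L.card := by
            have : 1 ≤ L.card := Finset.card_pos.2 ⟨ℓ, hℓ⟩
            omega

end Aux

/-- the trivial quadratic bound for lines. Cutting each of `n`
pairwise disjoint non-vertical lines at every point whose projection is an
intersection point of the projections of two distinct lines of the family yields
at most `n²` fragments, and these fragments admit a depth order. -/
theorem stmt_12
    (n : ℕ) (L : Finset (R3 × R3)) (hcard : L.card = n)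
    (hdir : ∀ ℓ ∈ L, ℓ.2 ≠ 0)
    (hNV : ∀ ℓ ∈ L, NonVertical (lineOf ℓ))
    (hdisj : ∀ ℓ ∈ L, ∀ ℓ' ∈ L, ℓ ≠ ℓ' → Disjoint (lineOf ℓ) (lineOf ℓ'))
    (X : Set R3)
    (hX : X = {p : R3 | (∃ ℓ ∈ L, p ∈ lineOf ℓ) ∧
      ∃ ℓ₁ ∈ L, ∃ ℓ₂ ∈ L, lineOf ℓ₁ ≠ lineOf ℓ₂ ∧
        vproj p ∈ vproj '' lineOf ℓ₁ ∧ vproj p ∈ vproj '' lineOf ℓ₂}) :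
    HasDepthOrder (⋃ ℓ ∈ L, cutFragments (lineOf ℓ) X) ∧
    (⋃ ℓ ∈ L, cutFragments (lineOf ℓ) X).ncard ≤ n ^ 2 := by
  classical
  constructor
  · -- depth order: `Below` never holds between fragments
    refine ⟨fun _ => 0, ?_⟩
    intro A hA B hB hAB
    exfalso
    simp only [mem_iUnion] at hA hB
    obtain ⟨ℓ, hℓ, pA, hpA, rfl⟩ := hA
    obtain ⟨ℓ', hℓ', pB, hpB, rfl⟩ := hB
    obtain ⟨p, hp, q, hq, hpq, hz⟩ := hAB
    have hpsub := connectedComponentIn_subset (lineOf ℓ \ X) pA hp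
    have hqsub := connectedComponentIn_subset (lineOf ℓ' \ X) pB hq
    by_cases hll : lineOf ℓ = lineOf ℓ'
    · have : p = q := hNV ℓ hℓ p hpsub.1 q (hll ▸ hqsub.1) hpq
      rw [this] at hz
      exact lt_irrefl _ hz
    · apply hpsub.2
      rw [hX]
      exact ⟨⟨ℓ, hℓ, hpsub.1⟩, ℓ, hℓ, ℓ', hℓ', hll,
        Set.mem_image_of_mem _ hpsub.1, ⟨q, hqsub.1, hpq.symm⟩⟩
  · -- the quadratic bound
    have key : ∀ ℓ ∈ L, (cutFragments (lineOf ℓ) X).Finite ∧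
        (cutFragments (lineOf ℓ) X).ncard ≤ n := by
      intro ℓ hℓ
      have := frag_bound L hdir hNV X hX hℓ
      rw [hcard] at this
      exact this
    have main : ∀ M : Finset (R3 × R3), M ⊆ L →
        (⋃ ℓ ∈ M, cutFragments (lineOf ℓ) X).ncard ≤ M.card * n := by
      intro M
      induction M using Finset.induction_on with
      | empty => simp
      | @insert b s hb ih =>
        intro hsub
        have hbL : b ∈ L := hsub (Finset.mem_insert_self _ _)
        have hsL : s ⊆ L := fun x hx => hsub (Finset.mem_insert_of_mem hx)
        rw [Finset.set_biUnion_insert, Finset.card_insert_of_notMem hb]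
        calc (cutFragments (lineOf b) X ∪ ⋃ ℓ ∈ s, cutFragments (lineOf ℓ) X).ncard
            ≤ (cutFragments (lineOf b) X).ncard +
              (⋃ ℓ ∈ s, cutFragments (lineOf ℓ) X).ncard := Set.ncard_union_le _ _
          _ ≤ n + s.card * n := Nat.add_le_add (key b hbL).2 (ih hsL)
          _ = (s.card + 1) * n := by ring
    have hmain := main L le_rfl
    rw [hcard] at hmain
    calc (⋃ ℓ ∈ L, cutFragments (lineOf ℓ) X).ncard ≤ n * n := hmain
      _ = n ^ 2 := (sq n).symm
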